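/- Let R = ℤ[s,t,u,v,w,x,y,z], p prime, q = p^e, k = q-1. Then (ut-xs)^{2k+1}(vz-wy)^{k+1}(vt-ys)^k(wt-zs)^k + (vt-ys)^{2k+1}(wx-uz)^{k+1}(wt-zs)^k(ut-xs)^k + (wt-zs)^{2k+1}(uy-vx)^{k+1}(ut-xs)^k(vt-ys)^k lies in the ideal (p(ut-xs)^{2k+1}, p(vt-ys)^{2k+1}, p(wt-zs)^{2k+1})R. -/

import Mathlib

open MvPolynomial

open Finset

set_option maxHeartbeats 1000000
set_option synthInstance.maxHeartbeats 400000

namespace Stmt17Aux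

variable {Rc : Type} [CommRing Rc]

abbrev M8 (Rc : Type) [CommRing Rc] := MvPolynomial (Fin 8) Rc
abbrev T2 (Rc : Type) [CommRing Rc] := Polynomial (Polynomial (M8 Rc))

noncomputable def Xv (i : Fin 8) : M8 Rc := MvPolynomial.X i

noncomputable def pA : M8 Rc := Xv 2 * Xv 1 - Xv 5 * Xv 0
noncomputable def pB : M8 Rc := Xv 3 * Xv 1 - Xv 6 * Xv 0
noncomputable def pC : M8 Rc := Xv 4 * Xv 1 - Xv 7 * Xv 0
noncomputable def pD : M8 Rc := Xv 3 * Xv 7 - Xv 4 * Xv 6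
noncomputable def pE : M8 Rc := Xv 4 * Xv 5 - Xv 2 * Xv 7
noncomputable def pF : M8 Rc := Xv 2 * Xv 6 - Xv 3 * Xv 5

noncomputable def CC : M8 Rc →+* T2 Rc := (Polynomial.C).comp (Polynomial.C)

noncomputable def XX : T2 Rc := Polynomial.X
noncomputable def YY : T2 Rc := Polynomial.C Polynomial.X

/-- linear form  a·XX + b·YY -/
noncomputable def Lin (a b : M8 Rc) : T2 Rc := CC a * XX + CC b * YY

noncomputable def Lu : T2 Rc := Lin (Xv 5) (Xv 2)
noncomputable def Lv : T2 Rc := Lin (Xv 6) (Xv 3)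
noncomputable def Lw : T2 Rc := Lin (Xv 7) (Xv 4)
noncomputable def LL : T2 Rc := Lin (Xv 1) (Xv 0)

/-- coefficient extraction of XX^k·YY^k -/
noncomputable def pk (k : ℕ) (f : T2 Rc) : M8 Rc := (f.coeff k).coeff k

lemma pk_add (k : ℕ) (f g : T2 Rc) : pk k (f + g) = pk k f + pk k g := by
  simp [pk]

lemma pk_CC_mul (k : ℕ) (a : M8 Rc) (f : T2 Rc) : pk k (CC a * f) = a * pk k f := by
  simp [pk, CC, Polynomial.coeff_C_mul]

lemma pk_XXpow_mul (k n : ℕ) (hn : k < n) (f : T2 Rc) : pk k (XX ^ n * f) = 0 := by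
  rw [pk, XX, mul_comm (G := T2 Rc), Polynomial.coeff_mul_X_pow']
  simp [Nat.not_le_of_lt hn]

lemma pk_YYpow_mul (k n : ℕ) (hn : k < n) (f : T2 Rc) : pk k (YY ^ n * f) = 0 := by
  rw [pk, YY, ← Polynomial.C_pow, Polynomial.coeff_C_mul, mul_comm (G := Polynomial (M8 Rc)),
    Polynomial.coeff_mul_X_pow']
  simp [Nat.not_le_of_lt hn]

lemma pk_XXYY (k a b : ℕ) : pk k ((XX:T2 Rc) ^ a * YY ^ b) =
    if a = k ∧ b = k then 1 else 0 := by
  rw [pk, XX, YY, ← Polynomial.C_pow, mul_comm (G := T2 Rc), Polynomial.coeff_C_mul,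
    Polynomial.coeff_X_pow]
  by_cases ha : a = k
  · simp [ha, Polynomial.coeff_X_pow, eq_comm]
  · rw [if_neg (fun h => ha h.symm)]
    simp [ha]

/-- the three fundamental linear identities -/
lemma idD : CC (pB : M8 Rc) * Lw - CC pC * Lv = CC pD * LL := by
  simp only [pB, pC, pD, Lw, Lv, LL, Lin, map_sub, map_mul]
  ring

lemma idE : CC (pC : M8 Rc) * Lu - CC pA * Lw = CC pE * LL := by
  simp only [pA, pC, pE, Lu, Lw, LL, Lin, map_sub, map_mul]
  ring

lemma idF : CC (pA : M8 Rc) * Lv - CC pB * Lu = CC pF * LL := by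
  simp only [pA, pB, pF, Lv, Lu, LL, Lin, map_sub, map_mul]
  ring

/-- geometric sum -/
noncomputable def HH (P Q : T2 Rc) (n : ℕ) : T2 Rc := ∑ r ∈ range n, P ^ r * Q ^ (n - 1 - r)

lemma geom_HH (P Q : T2 Rc) (n : ℕ) : (P - Q) * HH P Q n = P ^ n - Q ^ n := by
  rw [HH, mul_comm (G := T2 Rc)]; exact geom_sum₂_mul P Q n

lemma LL_ne_zero [Nontrivial Rc] : (LL : T2 Rc) ≠ 0 := by
  intro h
  have h1 : (LL : T2 Rc).coeff 1 = Polynomial.C (Xv 1) := by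
    simp [LL, Lin, CC, XX, YY, Polynomial.coeff_C_mul, Polynomial.coeff_C]
  rw [h] at h1
  simp only [Polynomial.coeff_zero] at h1
  have := h1.symm
  rw [Polynomial.C_eq_zero] at this
  exact MvPolynomial.X_ne_zero _ this

lemma CC_ne_zero [Nontrivial Rc] {a : M8 Rc} (ha : a ≠ 0) : (CC a : T2 Rc) ≠ 0 := by
  simp only [CC, RingHom.comp_apply, ne_eq, Polynomial.C_eq_zero]
  exact ha

/-- The main syzygy over any domain. -/
theorem syzygy [IsDomain Rc] (k : ℕ) :
    (pA:M8 Rc) ^ (2*k+1) * (pD * pk k (HH (CC pB * Lw) (CC pC * Lv) (2*k+1)))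
      + pB ^ (2*k+1) * (pE * pk k (HH (CC pC * Lu) (CC pA * Lw) (2*k+1)))
      + pC ^ (2*k+1) * (pF * pk k (HH (CC pA * Lv) (CC pB * Lu) (2*k+1))) = 0 := by
  set n := 2*k+1 with hn
  have h1 : CC (pD:M8 Rc) * LL * HH (CC pB * Lw) (CC pC * Lv) n
      = (CC pB * Lw) ^ n - (CC pC * Lv) ^ n := by rw [← idD]; exact geom_HH _ _ n
  have h2 : CC (pE:M8 Rc) * LL * HH (CC pC * Lu) (CC pA * Lw) n
      = (CC pC * Lu) ^ n - (CC pA * Lw) ^ n := by rw [← idE]; exact geom_HH _ _ n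
  have h3 : CC (pF:M8 Rc) * LL * HH (CC pA * Lv) (CC pB * Lu) n
      = (CC pA * Lv) ^ n - (CC pB * Lu) ^ n := by rw [← idF]; exact geom_HH _ _ n
  have big : CC ((pA:M8 Rc)^n * pD) * HH (CC pB * Lw) (CC pC * Lv) n
      + CC (pB^n * pE) * HH (CC pC * Lu) (CC pA * Lw) n
      + CC (pC^n * pF) * HH (CC pA * Lv) (CC pB * Lu) n = 0 := by
    apply mul_left_cancel₀ (LL_ne_zero (Rc := Rc))
    rw [mul_zero]
    calc LL * (CC ((pA:M8 Rc)^n * pD) * HH (CC pB * Lw) (CC pC * Lv) n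
        + CC (pB^n * pE) * HH (CC pC * Lu) (CC pA * Lw) n
        + CC (pC^n * pF) * HH (CC pA * Lv) (CC pB * Lu) n)
        = CC (pA^n) * (CC pD * LL * HH (CC pB * Lw) (CC pC * Lv) n)
          + CC (pB^n) * (CC pE * LL * HH (CC pC * Lu) (CC pA * Lw) n)
          + CC (pC^n) * (CC pF * LL * HH (CC pA * Lv) (CC pB * Lu) n) := by
          simp only [map_mul]; ring
      _ = CC (pA^n) * ((CC pB * Lw) ^ n - (CC pC * Lv) ^ n)
          + CC (pB^n) * ((CC pC * Lu) ^ n - (CC pA * Lw) ^ n)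
          + CC (pC^n) * ((CC pA * Lv) ^ n - (CC pB * Lu) ^ n) := by rw [h1, h2, h3]
      _ = 0 := by
          simp only [mul_pow (M := T2 Rc), ← map_pow]
          ring
  have := congrArg (pk k) big
  rw [pk_add, pk_add, pk_CC_mul, pk_CC_mul, pk_CC_mul] at this
  simpa [pk, mul_assoc] using this

lemma pk_sum {ι : Type} (k : ℕ) (s : Finset ι) (f : ι → T2 Rc) :
    pk k (∑ i ∈ s, f i) = ∑ i ∈ s, pk k (f i) := by
  simp [pk, Polynomial.finset_sum_coeff]

lemma pk_term (k : ℕ) (u v : M8 Rc) (i j bi bj : ℕ) :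
    pk k ((CC u * (XX ^ i * YY ^ bi)) * (CC v * (XX ^ j * YY ^ bj)))
      = if i + j = k ∧ bi + bj = k then u * v else 0 := by
  have h : (CC u * (XX ^ i * YY ^ bi)) * (CC v * (XX ^ j * YY ^ bj))
      = CC (u * v) * ((XX:T2 Rc) ^ (i+j) * YY ^ (bi+bj)) := by
    simp only [map_mul, pow_add]; ring
  rw [h, pk_CC_mul, pk_XXYY, mul_ite, mul_one, mul_zero]

lemma lin_pow (k : ℕ) (a b : M8 Rc) :
    (Lin a b) ^ k
      = ∑ i ∈ range (k+1), CC (a ^ i * b ^ (k-i) * (k.choose i : M8 Rc)) * (XX ^ i * YY ^ (k-i)) := by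
  rw [Lin, add_pow (R := T2 Rc)]
  refine Finset.sum_congr rfl fun i _ => ?_
  rw [show ((k.choose i : ℕ) : T2 Rc) = CC ((k.choose i : ℕ) : M8 Rc) from
    (map_natCast (CC (Rc := Rc)) (k.choose i)).symm]
  simp only [map_mul, map_pow, mul_pow]
  ring

lemma pk_linpow (k : ℕ) (a b c d : M8 Rc) :
    pk k ((Lin a b) ^ k * (Lin c d) ^ k)
      = ∑ m ∈ range (k+1),
          (a ^ m * b ^ (k-m) * (k.choose m : M8 Rc))
            * (c ^ (k-m) * d ^ m * (k.choose (k-m) : M8 Rc)) := by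
  rw [lin_pow, lin_pow, Finset.sum_mul_sum, pk_sum]
  simp only [pk_sum, pk_term]
  refine Finset.sum_congr rfl fun i hi => ?_
  rw [Finset.mem_range] at hi
  have hik : i ≤ k := by omega
  rw [Finset.sum_eq_single (k - i)]
  · have hc : i + (k - i) = k ∧ (k - i) + (k - (k - i)) = k := by omega
    rw [if_pos hc, Nat.sub_sub_self hik]
  · intro j hj hne
    rw [Finset.mem_range] at hj
    have : ¬(i + j = k ∧ (k - i) + (k - j) = k) := by omega
    rw [if_neg this]
  · intro habs
    exact absurd (Finset.mem_range.mpr (by omega)) habs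

section CharPSection

variable (p : ℕ) [Fact p.Prime] {e k : ℕ}

lemma cast_choose_eq (hk : k + 1 = p ^ e) {m : ℕ} (hm : m ≤ k) :
    ((k.choose m : ℕ) : ZMod p) = (-1 : ZMod p) ^ m := by
  induction m with
  | zero => simp
  | succ m ih =>
    have hm' : m ≤ k := Nat.le_of_succ_le hm
    have hdvd : p ∣ (k+1).choose (m+1) := by
      rw [hk]
      exact (Fact.out : p.Prime).dvd_choose_pow (Nat.succ_ne_zero m) (by omega)
    have hcast : (((k+1).choose (m+1) : ℕ) : ZMod p) = 0 :=
      (ZMod.natCast_eq_zero_iff _ p).mpr hdvd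
    rw [Nat.choose_succ_succ] at hcast
    push_cast at hcast
    rw [ih hm'] at hcast
    have : ((k.choose (m+1) : ℕ) : ZMod p) = -((-1 : ZMod p) ^ m) := by
      linear_combination hcast
    rw [this, pow_succ]
    ring

lemma neg_one_pow_k (hk : k + 1 = p ^ e) : ((-1 : ZMod p)) ^ k = 1 := by
  rcases eq_or_ne p 2 with h2 | h2
  · subst h2
    have h1 : (-1 : ZMod 2) = 1 := rfl
    rw [h1, one_pow]
  · have hodd : Odd (p ^ e) := ((Fact.out : p.Prime).odd_of_ne_two h2).pow
    obtain ⟨m, hm⟩ := hodd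
    have : Even k := ⟨m, by omega⟩
    exact this.neg_one_pow

lemma pk_linpow_char (hk : k + 1 = p ^ e) (a b c d : M8 (ZMod p)) :
    pk k ((Lin a b) ^ k * (Lin c d) ^ k) = (b * c - a * d) ^ k := by
  have hone : (-1 : M8 (ZMod p)) ^ k = 1 := by
    calc (-1 : M8 (ZMod p)) ^ k = MvPolynomial.C ((-1 : ZMod p) ^ k) := by simp [map_pow]
      _ = 1 := by rw [neg_one_pow_k p hk, map_one]
  have hcastc : ∀ j, j ≤ k → ((k.choose j : ℕ) : M8 (ZMod p)) = (-1 : M8 (ZMod p)) ^ j := by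
    intro j hj
    rw [show ((k.choose j : ℕ) : M8 (ZMod p)) = MvPolynomial.C ((k.choose j : ℕ) : ZMod p) from
      (map_natCast (MvPolynomial.C : ZMod p →+* M8 (ZMod p)) _).symm, cast_choose_eq p hk hj]
    simp [map_pow]
  have hmm : ∀ j, j ≤ k → ((-1 : M8 (ZMod p)) ^ (k - j)) * ((-1 : M8 (ZMod p)) ^ j) = 1 := by
    intro j hj
    rw [← pow_add, show k - j + j = k by omega, hone]
  rw [pk_linpow]
  have hstep : ∀ m ∈ range (k+1),
      (a ^ m * b ^ (k-m) * (k.choose m : M8 (ZMod p)))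
        * (c ^ (k-m) * d ^ m * (k.choose (k-m) : M8 (ZMod p)))
      = (b * c) ^ (k-m) * (a * d) ^ m := by
    intro m hm
    rw [Finset.mem_range] at hm
    have hmk : m ≤ k := by omega
    rw [hcastc m hmk, hcastc (k-m) (Nat.sub_le k m)]
    calc a ^ m * b ^ (k-m) * (-1 : M8 (ZMod p)) ^ m
          * (c ^ (k-m) * d ^ m * (-1 : M8 (ZMod p)) ^ (k-m))
        = ((-1 : M8 (ZMod p)) ^ (k-m) * (-1 : M8 (ZMod p)) ^ m)
            * ((b * c) ^ (k-m) * (a * d) ^ m) := by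
          simp only [mul_pow]; ring
      _ = (b * c) ^ (k-m) * (a * d) ^ m := by rw [hmm m hmk, one_mul]
  rw [Finset.sum_congr rfl hstep, sub_eq_add_neg]
  calc ∑ m ∈ range (k+1), (b*c) ^ (k-m) * (a*d) ^ m
      = ∑ j ∈ range (k+1), (b*c) ^ j * (a*d) ^ (k-j) := by
        rw [← Finset.sum_range_reflect (fun m => (b*c) ^ (k-m) * (a*d) ^ m) (k+1)]
        refine Finset.sum_congr rfl fun j hj => ?_
        rw [Finset.mem_range] at hj
        rw [show k + 1 - 1 - j = k - j by omega, Nat.sub_sub_self (by omega : j ≤ k)]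
    _ = ∑ j ∈ range (k+1), (b*c) ^ j * (-(a*d)) ^ (k-j) * ((k.choose j : ℕ) : M8 (ZMod p)) := by
        refine Finset.sum_congr rfl fun j hj => ?_
        rw [Finset.mem_range] at hj
        have hjk : j ≤ k := by omega
        rw [neg_pow, hcastc j hjk]
        calc (b*c) ^ j * (a*d) ^ (k-j)
            = ((-1 : M8 (ZMod p)) ^ (k-j) * (-1 : M8 (ZMod p)) ^ j)
                * ((b*c) ^ j * (a*d) ^ (k-j)) := by rw [hmm j hjk, one_mul]
          _ = (b*c) ^ j * ((-1 : M8 (ZMod p)) ^ (k-j) * (a*d) ^ (k-j))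
                * (-1 : M8 (ZMod p)) ^ j := by ring
    _ = (b*c + -(a*d)) ^ k := (add_pow _ _ k).symm

lemma pk_HH_char (hk : k + 1 = p ^ e)
    (β γ δ a₁ a₂ b₁ b₂ : M8 (ZMod p))
    (hid : CC β * Lin a₁ a₂ - CC γ * Lin b₁ b₂ = CC δ * LL)
    (hδ : δ ≠ 0) :
    pk k (HH (CC β * Lin a₁ a₂) (CC γ * Lin b₁ b₂) (2*k+1))
      = γ ^ k * δ ^ k * (b₂ * Xv 1 - b₁ * Xv 0) ^ k := by
  set P : T2 (ZMod p) := CC β * Lin a₁ a₂ with hP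
  set Q : T2 (ZMod p) := CC γ * Lin b₁ b₂ with hQ
  have hPQ0 : P - Q ≠ 0 := by
    rw [hid]
    exact mul_ne_zero (CC_ne_zero hδ) LL_ne_zero
  have hfrob : (P - Q) ^ (k+1) = P ^ (k+1) - Q ^ (k+1) := by
    rw [hk]
    exact sub_pow_char_pow P Q e
  have hdec : HH P Q (2*k+1) = P ^ (k+1) * HH P Q k + Q ^ k * (P - Q) ^ k := by
    apply mul_left_cancel₀ hPQ0
    rw [geom_HH, mul_add,
      show (P-Q) * (P ^ (k+1) * HH P Q k) = P ^ (k+1) * ((P-Q) * HH P Q k) by ring,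
      geom_HH,
      show (P-Q) * (Q ^ k * (P-Q) ^ k) = Q ^ k * (P-Q) ^ (k+1) by ring,
      hfrob]
    ring
  rw [hdec, pk_add]
  have h1 : pk k (P ^ (k+1) * HH P Q k) = 0 := by
    have hlin : (Lin a₁ a₂ : T2 (ZMod p)) ^ (k+1) = (CC a₁ * XX) ^ (k+1) + (CC a₂ * YY) ^ (k+1) := by
      rw [Lin, hk]
      exact add_pow_char_pow (R := T2 (ZMod p)) _ _ p e
    have hPpow : P ^ (k+1) = CC (β ^ (k+1) * a₁ ^ (k+1)) * (XX : T2 (ZMod p)) ^ (k+1)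
        + CC (β ^ (k+1) * a₂ ^ (k+1)) * (YY : T2 (ZMod p)) ^ (k+1) := by
      rw [hP, mul_pow (M := T2 (ZMod p)), hlin]
      simp only [map_mul, map_pow]
      ring
    rw [hPpow, add_mul, pk_add,
      show CC (β ^ (k+1) * a₁ ^ (k+1)) * (XX : T2 (ZMod p)) ^ (k+1) * HH P Q k
        = CC (β ^ (k+1) * a₁ ^ (k+1)) * ((XX : T2 (ZMod p)) ^ (k+1) * HH P Q k) from mul_assoc _ _ _,
      show CC (β ^ (k+1) * a₂ ^ (k+1)) * (YY : T2 (ZMod p)) ^ (k+1) * HH P Q k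
        = CC (β ^ (k+1) * a₂ ^ (k+1)) * ((YY : T2 (ZMod p)) ^ (k+1) * HH P Q k) from mul_assoc _ _ _,
      pk_CC_mul, pk_CC_mul,
      pk_XXpow_mul k (k+1) (by omega), pk_YYpow_mul k (k+1) (by omega)]
    simp
  rw [h1, zero_add]
  have h2 : Q ^ k * (P - Q) ^ k = CC (γ ^ k * δ ^ k) * ((Lin b₁ b₂) ^ k * LL ^ k) := by
    rw [hid, hQ]
    simp only [map_mul, map_pow]
    ring
  rw [h2, pk_CC_mul,
    show (LL : T2 (ZMod p)) = Lin (Xv 1) (Xv 0) from rfl,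
    pk_linpow_char p hk]

lemma pD_ne_zero : (pD : M8 (ZMod p)) ≠ 0 := by
  intro h
  have h2 := congrArg (MvPolynomial.eval (fun i : Fin 8 => if i = 3 ∨ i = 7 then (1 : ZMod p) else 0)) h
  simp [pD, Xv] at h2

lemma pE_ne_zero : (pE : M8 (ZMod p)) ≠ 0 := by
  intro h
  have h2 := congrArg (MvPolynomial.eval (fun i : Fin 8 => if i = 4 ∨ i = 5 then (1 : ZMod p) else 0)) h
  simp [pE, Xv] at h2

lemma pF_ne_zero : (pF : M8 (ZMod p)) ≠ 0 := by
  intro h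
  have h2 := congrArg (MvPolynomial.eval (fun i : Fin 8 => if i = 2 ∨ i = 6 then (1 : ZMod p) else 0)) h
  simp [pF, Xv] at h2

end CharPSection

section Transfer

variable (p : ℕ) [Fact p.Prime]

noncomputable def φ8 : M8 ℤ →+* M8 (ZMod p) := MvPolynomial.map (Int.castRingHom (ZMod p))

noncomputable def φT : T2 ℤ →+* T2 (ZMod p) :=
  Polynomial.mapRingHom (Polynomial.mapRingHom (φ8 p))

lemma φT_CC (f : M8 ℤ) : φT p (CC f) = CC (φ8 p f) := by
  simp [φT, CC]

lemma φT_XX : φT p XX = XX := by simp [φT, XX]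

lemma φT_YY : φT p YY = YY := by simp [φT, YY]

lemma φ8_Xv (i : Fin 8) : φ8 p (Xv i) = Xv i := by simp [φ8, Xv]

lemma φ8_pA : φ8 p pA = pA := by simp [φ8, pA, Xv]
lemma φ8_pB : φ8 p pB = pB := by simp [φ8, pB, Xv]
lemma φ8_pC : φ8 p pC = pC := by simp [φ8, pC, Xv]
lemma φ8_pD : φ8 p pD = pD := by simp [φ8, pD, Xv]
lemma φ8_pE : φ8 p pE = pE := by simp [φ8, pE, Xv]
lemma φ8_pF : φ8 p pF = pF := by simp [φ8, pF, Xv]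

lemma φT_Lin (a b : M8 ℤ) : φT p (Lin a b) = Lin (φ8 p a) (φ8 p b) := by
  simp only [Lin, map_add, map_mul, φT_CC, φT_XX, φT_YY]

lemma φ8_pk (kk : ℕ) (f : T2 ℤ) : φ8 p (pk kk f) = pk kk (φT p f) := by
  simp [pk, φT, Polynomial.coeff_map]

lemma φT_HH (P Q : T2 ℤ) (n : ℕ) : φT p (HH P Q n) = HH (φT p P) (φT p Q) n := by
  simp [HH, map_sum, map_mul, map_pow]

lemma φT_BLw : φT p (CC pB * Lw) = CC (pB : M8 (ZMod p)) * Lin (Xv 7) (Xv 4) := by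
  rw [map_mul, φT_CC, φ8_pB, show (Lw : T2 ℤ) = Lin (Xv 7) (Xv 4) from rfl, φT_Lin, φ8_Xv, φ8_Xv]

lemma φT_CLv : φT p (CC pC * Lv) = CC (pC : M8 (ZMod p)) * Lin (Xv 6) (Xv 3) := by
  rw [map_mul, φT_CC, φ8_pC, show (Lv : T2 ℤ) = Lin (Xv 6) (Xv 3) from rfl, φT_Lin, φ8_Xv, φ8_Xv]

lemma φT_CLu : φT p (CC pC * Lu) = CC (pC : M8 (ZMod p)) * Lin (Xv 5) (Xv 2) := by
  rw [map_mul, φT_CC, φ8_pC, show (Lu : T2 ℤ) = Lin (Xv 5) (Xv 2) from rfl, φT_Lin, φ8_Xv, φ8_Xv]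

lemma φT_ALw : φT p (CC pA * Lw) = CC (pA : M8 (ZMod p)) * Lin (Xv 7) (Xv 4) := by
  rw [map_mul, φT_CC, φ8_pA, show (Lw : T2 ℤ) = Lin (Xv 7) (Xv 4) from rfl, φT_Lin, φ8_Xv, φ8_Xv]

lemma φT_ALv : φT p (CC pA * Lv) = CC (pA : M8 (ZMod p)) * Lin (Xv 6) (Xv 3) := by
  rw [map_mul, φT_CC, φ8_pA, show (Lv : T2 ℤ) = Lin (Xv 6) (Xv 3) from rfl, φT_Lin, φ8_Xv, φ8_Xv]

lemma φT_BLu : φT p (CC pB * Lu) = CC (pB : M8 (ZMod p)) * Lin (Xv 5) (Xv 2) := by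
  rw [map_mul, φT_CC, φ8_pB, show (Lu : T2 ℤ) = Lin (Xv 5) (Xv 2) from rfl, φT_Lin, φ8_Xv, φ8_Xv]

lemma exists_p_mul (f : M8 ℤ) (h : φ8 p f = 0) : ∃ g : M8 ℤ, f = (p : M8 ℤ) * g := by
  have hdvd : MvPolynomial.C ((p : ℕ) : ℤ) ∣ f := by
    rw [MvPolynomial.C_dvd_iff_dvd_coeff]
    intro i
    have hcoeff : ((MvPolynomial.coeff i f : ℤ) : ZMod p) = 0 := by
      have h2 := congrArg (MvPolynomial.coeff i) h
      rwa [φ8, MvPolynomial.coeff_map, MvPolynomial.coeff_zero] at h2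
    exact_mod_cast (ZMod.intCast_zmod_eq_zero_iff_dvd _ p).mp hcoeff
  obtain ⟨g, hg⟩ := hdvd
  refine ⟨g, ?_⟩
  rw [hg, show (MvPolynomial.C ((p:ℕ):ℤ) : M8 ℤ) = (p : M8 ℤ) from
    map_natCast (MvPolynomial.C : ℤ →+* M8 ℤ) p]

end Transfer

section Congruences

variable (p : ℕ) [Fact p.Prime] {e k : ℕ}

lemma cong1 (hk : k + 1 = p ^ e) :
    ∃ g : M8 ℤ, (pB:M8 ℤ) ^ k * pC ^ k * pD ^ (k+1)
      - pD * pk k (HH (CC pB * Lw) (CC pC * Lv) (2*k+1)) = (p : M8 ℤ) * g := by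
  apply exists_p_mul
  rw [map_sub, map_mul, map_mul, map_mul, map_pow, map_pow, map_pow,
    φ8_pB, φ8_pC, φ8_pD, φ8_pk, φT_HH, φT_BLw, φT_CLv]
  rw [pk_HH_char p hk pB pC pD (Xv 7) (Xv 4) (Xv 6) (Xv 3) idD (pD_ne_zero p)]
  rw [show (Xv 3 * Xv 1 - Xv 6 * Xv 0 : M8 (ZMod p)) = pB from rfl]
  ring

lemma cong2 (hk : k + 1 = p ^ e) :
    ∃ g : M8 ℤ, (pC:M8 ℤ) ^ k * pA ^ k * pE ^ (k+1)
      - pE * pk k (HH (CC pC * Lu) (CC pA * Lw) (2*k+1)) = (p : M8 ℤ) * g := by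
  apply exists_p_mul
  rw [map_sub, map_mul, map_mul, map_mul, map_pow, map_pow, map_pow,
    φ8_pC, φ8_pA, φ8_pE, φ8_pk, φT_HH, φT_CLu, φT_ALw]
  rw [pk_HH_char p hk pC pA pE (Xv 5) (Xv 2) (Xv 7) (Xv 4) idE (pE_ne_zero p)]
  rw [show (Xv 4 * Xv 1 - Xv 7 * Xv 0 : M8 (ZMod p)) = pC from rfl]
  ring

lemma cong3 (hk : k + 1 = p ^ e) :
    ∃ g : M8 ℤ, (pA:M8 ℤ) ^ k * pB ^ k * pF ^ (k+1)
      - pF * pk k (HH (CC pA * Lv) (CC pB * Lu) (2*k+1)) = (p : M8 ℤ) * g := by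
  apply exists_p_mul
  rw [map_sub, map_mul, map_mul, map_mul, map_pow, map_pow, map_pow,
    φ8_pA, φ8_pB, φ8_pF, φ8_pk, φT_HH, φT_ALv, φT_BLu]
  rw [pk_HH_char p hk pA pB pF (Xv 6) (Xv 3) (Xv 5) (Xv 2) idF (pF_ne_zero p)]
  rw [show (Xv 2 * Xv 1 - Xv 5 * Xv 0 : M8 (ZMod p)) = pA from rfl]
  ring

end Congruences

end Stmt17Aux

theorem stmt_17 (p : ℕ) (hp : p.Prime) (e : ℕ) (he : 1 ≤ e) (q : ℕ) (hq : q = p ^ e)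
    (k : ℕ) (hk : k = q - 1) :
    let R := MvPolynomial (Fin 8) ℤ
    let s : R := X 0; let t : R := X 1; let u : R := X 2; let v : R := X 3
    let w : R := X 4; let x : R := X 5; let y : R := X 6; let z : R := X 7
    (u * t - x * s) ^ (2 * k + 1) * (v * z - w * y) ^ (k + 1)
        * (v * t - y * s) ^ k * (w * t - z * s) ^ k
      + (v * t - y * s) ^ (2 * k + 1) * (w * x - u * z) ^ (k + 1)
        * (w * t - z * s) ^ k * (u * t - x * s) ^ k
      + (w * t - z * s) ^ (2 * k + 1) * (u * y - v * x) ^ (k + 1)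
        * (u * t - x * s) ^ k * (v * t - y * s) ^ k ∈
      Ideal.span {(p : R) * (u * t - x * s) ^ (2 * k + 1),
        (p : R) * (v * t - y * s) ^ (2 * k + 1),
        (p : R) * (w * t - z * s) ^ (2 * k + 1)} := by
  intro R s t u v w x y z
  haveI : Fact p.Prime := ⟨hp⟩
  have hk1 : k + 1 = p ^ e := by
    subst hq
    subst hk
    have h1 : 1 ≤ p ^ e := Nat.one_le_pow _ _ hp.pos
    omega
  obtain ⟨g₁, hg₁⟩ := Stmt17Aux.cong1 p hk1
  obtain ⟨g₂, hg₂⟩ := Stmt17Aux.cong2 p hk1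
  obtain ⟨g₃, hg₃⟩ := Stmt17Aux.cong3 p hk1
  have hsyz := Stmt17Aux.syzygy (Rc := ℤ) k
  show (Stmt17Aux.pA ^ (2*k+1) * Stmt17Aux.pD ^ (k+1) * Stmt17Aux.pB ^ k * Stmt17Aux.pC ^ k
      + Stmt17Aux.pB ^ (2*k+1) * Stmt17Aux.pE ^ (k+1) * Stmt17Aux.pC ^ k * Stmt17Aux.pA ^ k
      + Stmt17Aux.pC ^ (2*k+1) * Stmt17Aux.pF ^ (k+1) * Stmt17Aux.pA ^ k * Stmt17Aux.pB ^ k)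
      ∈ Ideal.span {(p : Stmt17Aux.M8 ℤ) * Stmt17Aux.pA ^ (2*k+1),
        (p : Stmt17Aux.M8 ℤ) * Stmt17Aux.pB ^ (2*k+1),
        (p : Stmt17Aux.M8 ℤ) * Stmt17Aux.pC ^ (2*k+1)}
  have key : Stmt17Aux.pA ^ (2*k+1) * Stmt17Aux.pD ^ (k+1) * Stmt17Aux.pB ^ k * Stmt17Aux.pC ^ k
      + Stmt17Aux.pB ^ (2*k+1) * Stmt17Aux.pE ^ (k+1) * Stmt17Aux.pC ^ k * Stmt17Aux.pA ^ k
      + Stmt17Aux.pC ^ (2*k+1) * Stmt17Aux.pF ^ (k+1) * Stmt17Aux.pA ^ k * Stmt17Aux.pB ^ k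
      = g₁ * ((p : Stmt17Aux.M8 ℤ) * Stmt17Aux.pA ^ (2*k+1))
      + g₂ * ((p : Stmt17Aux.M8 ℤ) * Stmt17Aux.pB ^ (2*k+1))
      + g₃ * ((p : Stmt17Aux.M8 ℤ) * Stmt17Aux.pC ^ (2*k+1)) := by
    linear_combination (Stmt17Aux.pA ^ (2*k+1)) * hg₁ + (Stmt17Aux.pB ^ (2*k+1)) * hg₂
      + (Stmt17Aux.pC ^ (2*k+1)) * hg₃ + hsyz
  rw [key]
  refine Ideal.add_mem _ (Ideal.add_mem _ ?_ ?_) ?_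
  · exact Ideal.mul_mem_left _ _ (Ideal.subset_span (by simp))
  · exact Ideal.mul_mem_left _ _ (Ideal.subset_span (by simp))
  · exact Ideal.mul_mem_left _ _ (Ideal.subset_span (by simp))
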